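/- Let X_1,...,X_n be i.i.d. Bernoulli(p) random variables. For a tuple s of r distinct indices, let X_s = ∏_{u∈s} X_u and Z_s = X_s - p^r. Let s_1,...,s_L be tuples of r distinct indices each, with a = |⋃_j s̄_j|, such that for every i, s̄_i intersects ⋃_{j≠i} s̄_j. Then |E[Z_{s_1}···Z_{s_L}] - p^a| ≤ (2^L - 1) p^{a+1}. -/

import Mathlib

open Finset

noncomputable section

/-- Probability weight of an outcome `ω` of `n` i.i.d. Bernoulli(p) variables. -/
def wtI (n : ℕ) (p : ℝ) (ω : Fin n → Bool) : ℝ :=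
  ∏ v : Fin n, if ω v then p else 1 - p

/-- Expectation under `n` i.i.d. Bernoulli(p) variables. -/
def EI (n : ℕ) (p : ℝ) (f : (Fin n → Bool) → ℝ) : ℝ :=
  ∑ ω : Fin n → Bool, wtI n p ω * f ω

/-- `Z_s = X_s - p^r` where `X_s = ∏_{u ∈ s̄} X_u` for a tuple `s` of `r` distinct indices. -/
def Zt {n r : ℕ} (p : ℝ) (s : Fin r ↪ Fin n) (ω : Fin n → Bool) : ℝ :=
  (∏ u ∈ Finset.univ.map s, if ω u then (1 : ℝ) else 0) - p ^ r


lemma biUnion_union_eq {alpha beta : Type*} [DecidableEq alpha] [DecidableEq beta]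
    (A B : Finset alpha) (g : alpha → Finset beta) :
    (A ∪ B).biUnion g = A.biUnion g ∪ B.biUnion g := by
  ext x
  simp only [Finset.mem_biUnion, Finset.mem_union, or_and_right, exists_or]

lemma prod_ind_union {n : ℕ} (ω : Fin n → Bool) (A B : Finset (Fin n)) :
    ∏ u ∈ A ∪ B, (if ω u then (1:ℝ) else 0)
      = (∏ u ∈ A, if ω u then (1:ℝ) else 0) * ∏ u ∈ B, if ω u then (1:ℝ) else 0 := by
  by_cases h : ∀ u ∈ A ∪ B, ω u = true
  · rw [Finset.prod_eq_one (fun u hu => by simp [h u hu]),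
        Finset.prod_eq_one (fun u hu => by simp [h u (Finset.mem_union_left B hu)]),
        Finset.prod_eq_one (fun u hu => by simp [h u (Finset.mem_union_right A hu)])]
    norm_num
  · push_neg at h
    obtain ⟨u, hu, hfu⟩ := h
    have hz : (if ω u then (1:ℝ) else 0) = 0 := by simp [hfu]
    rw [Finset.prod_eq_zero hu hz]
    rcases Finset.mem_union.mp hu with h' | h'
    · rw [Finset.prod_eq_zero h' hz, zero_mul]
    · rw [Finset.prod_eq_zero h' hz, mul_zero]

lemma prod_prod_ind {n L : ℕ} (ω : Fin n → Bool) (T : Finset (Fin L))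
    (f : Fin L → Finset (Fin n)) :
    ∏ j ∈ T, ∏ u ∈ f j, (if ω u then (1:ℝ) else 0)
      = ∏ u ∈ T.biUnion f, (if ω u then (1:ℝ) else 0) := by
  induction T using Finset.induction_on with
  | empty => simp
  | insert _ _ hj ih =>
    rw [Finset.biUnion_insert, Finset.prod_insert hj, ih, prod_ind_union]
lemma EI_indicator (n : ℕ) (p : ℝ) (A : Finset (Fin n)) :
    EI n p (fun ω => ∏ u ∈ A, if ω u then (1:ℝ) else 0) = p ^ A.card := by
  have h : ∀ ω : Fin n → Bool, wtI n p ω * ∏ u ∈ A, (if ω u then (1:ℝ) else 0)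
      = ∏ v : Fin n, ((if ω v then p else 1 - p) *
          (if v ∈ A then (if ω v then (1:ℝ) else 0) else 1)) := by
    intro ω
    rw [Finset.prod_mul_distrib, Finset.prod_ite_mem, Finset.univ_inter]
    rfl
  unfold EI
  simp only [h]
  have := Finset.prod_univ_sum (fun _ : Fin n => (univ : Finset Bool))
    (fun v b => (if b then p else 1 - p) * (if v ∈ A then (if b then (1:ℝ) else 0) else 1))
  rw [Fintype.piFinset_univ] at this
  rw [← this]
  have h2 : ∀ v : Fin n, (∑ b : Bool, (if b then p else 1 - p) *
      (if v ∈ A then (if b then (1:ℝ) else 0) else 1)) = if v ∈ A then p else 1 := by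
    intro v
    by_cases hv : v ∈ A <;> simp [Fintype.sum_bool, hv] <;> ring
  simp only [h2]
  rw [Finset.prod_ite_mem, Finset.univ_inter, Finset.prod_const]

lemma EI_sum {n : ℕ} {p : ℝ} {ι : Type*} (S : Finset ι) (F : ι → (Fin n → Bool) → ℝ) :
    EI n p (fun ω => ∑ T ∈ S, F T ω) = ∑ T ∈ S, EI n p (F T) := by
  unfold EI
  simp only [Finset.mul_sum]
  exact Finset.sum_comm

lemma EI_smul {n : ℕ} {p : ℝ} (c : ℝ) (F : (Fin n → Bool) → ℝ) :
    EI n p (fun ω => F ω * c) = EI n p F * c := by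
  unfold EI
  rw [Finset.sum_mul]
  simp [mul_assoc]

/-- For tuples `s_1,…,s_L` of `r` distinct indices each, with `a = |⋃_j s̄_j|`, such that
every `s̄_i` meets `⋃_{j≠i} s̄_j`, one has `|E[Z_{s_1}⋯Z_{s_L}] - p^a| ≤ (2^L - 1) p^{a+1}`. -/
theorem stmt1 (n r L : ℕ) (p : ℝ) (hp0 : 0 ≤ p) (hp1 : p ≤ 1)
    (s : Fin L → (Fin r ↪ Fin n))
    (hmeet : ∀ i : Fin L, ∃ j : Fin L, j ≠ i ∧
      ((Finset.univ.map (s i)) ∩ (Finset.univ.map (s j))).Nonempty) :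
    |EI n p (fun ω => ∏ j : Fin L, Zt p (s j) ω) -
        p ^ (Finset.univ.biUnion fun j : Fin L => Finset.univ.map (s j)).card| ≤
      ((2 : ℝ) ^ L - 1) *
        p ^ ((Finset.univ.biUnion fun j : Fin L => Finset.univ.map (s j)).card + 1) := by
  classical
  set f : Fin L → Finset (Fin n) := fun j => Finset.univ.map (s j) with hf
  set a : ℕ := (Finset.univ.biUnion f).card with ha
  -- key combinatorial bound
  have key : ∀ T : Finset (Fin L), T ≠ univ →
      a + 1 ≤ (univ \ T).card * r + (T.biUnion f).card := by
    intro T hT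
    obtain ⟨i, hi⟩ : ∃ i, i ∉ T := by
      have := mt Finset.eq_univ_iff_forall.mpr hT
      push_neg at this; exact this
    obtain ⟨j, hji, hne⟩ := hmeet i
    set U : Finset (Fin L) := Finset.univ.erase i with hU
    have hjU : j ∈ U := Finset.mem_erase.mpr ⟨hji, Finset.mem_univ j⟩
    have hr : 1 ≤ r := by
      obtain ⟨x, hx⟩ := hne
      rcases Finset.mem_map.mp (Finset.mem_inter.mp hx).1 with ⟨y, -, -⟩
      exact Nat.one_le_iff_ne_zero.mpr (by rintro rfl; exact y.elim0)
    have hins : (Finset.univ : Finset (Fin L)) = insert i U :=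
      (Finset.insert_erase (Finset.mem_univ i)).symm
    have h1 : a + 1 ≤ r + (U.biUnion f).card := by
      have hsplit : Finset.univ.biUnion f = f i ∪ U.biUnion f := by
        conv_lhs => rw [hins]
        rw [Finset.biUnion_insert]
      have hinter : ((f i) ∩ (U.biUnion f)).Nonempty := by
        obtain ⟨x, hx⟩ := hne
        exact ⟨x, Finset.mem_inter.mpr ⟨(Finset.mem_inter.mp hx).1,
          Finset.mem_biUnion.mpr ⟨j, hjU, (Finset.mem_inter.mp hx).2⟩⟩⟩
      have hcui := Finset.card_union_add_card_inter (f i) (U.biUnion f)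
      have hcard_fi : (f i).card = r := by simp [hf]
      have h2 : 1 ≤ ((f i) ∩ (U.biUnion f)).card := Finset.card_pos.mpr hinter
      have ha' : a = (f i ∪ U.biUnion f).card := by rw [ha, hsplit]
      omega
    have hTU : T ⊆ U := fun t ht =>
      Finset.mem_erase.mpr ⟨fun h => hi (h ▸ ht), Finset.mem_univ t⟩
    have h3 : (U.biUnion f).card ≤ (T.biUnion f).card + r * (U \ T).card := by
      calc (U.biUnion f).card = ((T ∪ (U \ T)).biUnion f).card := by
            rw [Finset.union_sdiff_of_subset hTU]
        _ = ((T.biUnion f) ∪ ((U \ T).biUnion f)).card := by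
            rw [biUnion_union_eq]
        _ ≤ (T.biUnion f).card + ((U \ T).biUnion f).card := Finset.card_union_le _ _
        _ ≤ (T.biUnion f).card + ∑ k ∈ U \ T, (f k).card :=
            Nat.add_le_add_left Finset.card_biUnion_le _
        _ = (T.biUnion f).card + r * (U \ T).card := by
            simp [hf, Finset.sum_const, mul_comm]
    have h4 : (univ \ T).card = (U \ T).card + 1 := by
      have heq : (univ : Finset (Fin L)) \ T = insert i (U \ T) := by
        ext x
        by_cases hx : x = i <;> simp [hx, hi, hU, Finset.mem_erase, Finset.mem_sdiff]
      rw [heq, Finset.card_insert_of_notMem (by simp [hU])]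
    calc a + 1 ≤ r + (U.biUnion f).card := h1
      _ ≤ r + ((T.biUnion f).card + r * (U \ T).card) := Nat.add_le_add_left h3 r
      _ = (univ \ T).card * r + (T.biUnion f).card := by rw [h4]; ring
  -- expansion of the product
  have expand : ∀ ω : Fin n → Bool, ∏ j : Fin L, Zt p (s j) ω
      = ∑ T ∈ (Finset.univ : Finset (Fin L)).powerset,
          (∏ u ∈ T.biUnion f, if ω u then (1:ℝ) else 0) * (-(p ^ r)) ^ (univ \ T).card := by
    intro ω
    have hz : ∀ j : Fin L, Zt p (s j) ω
        = (∏ u ∈ f j, if ω u then (1:ℝ) else 0) + (-(p ^ r)) := by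
      intro j; rw [Zt, sub_eq_add_neg]
    simp only [hz]
    rw [Finset.prod_add]
    exact Finset.sum_congr rfl fun T _ => by rw [prod_prod_ind, Finset.prod_const]
  have hEI : EI n p (fun ω => ∏ j : Fin L, Zt p (s j) ω)
      = ∑ T ∈ (Finset.univ : Finset (Fin L)).powerset,
          p ^ (T.biUnion f).card * (-(p ^ r)) ^ (univ \ T).card := by
    rw [show (fun ω => ∏ j : Fin L, Zt p (s j) ω)
        = (fun ω => ∑ T ∈ (Finset.univ : Finset (Fin L)).powerset,
            (∏ u ∈ T.biUnion f, if ω u then (1:ℝ) else 0) * (-(p ^ r)) ^ (univ \ T).card)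
        from funext expand, EI_sum]
    exact Finset.sum_congr rfl fun T _ => by rw [EI_smul, EI_indicator]
  rw [hEI]
  have huniv : (univ : Finset (Fin L)) ∈ (univ : Finset (Fin L)).powerset :=
    Finset.mem_powerset_self _
  rw [← Finset.add_sum_erase _ _ huniv]
  have hu : p ^ ((univ : Finset (Fin L)).biUnion f).card * (-(p ^ r)) ^ ((univ : Finset (Fin L)) \ univ).card
      = p ^ a := by simp [ha]
  rw [hu, add_sub_cancel_left]
  have hbound : ∀ T ∈ ((univ : Finset (Fin L)).powerset).erase univ,
      |p ^ (T.biUnion f).card * (-(p ^ r)) ^ (univ \ T).card| ≤ p ^ (a + 1) := by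
    intro T hT
    have hTne : T ≠ univ := (Finset.mem_erase.mp hT).1
    rw [abs_mul, abs_pow, abs_pow, abs_neg, abs_pow, abs_of_nonneg hp0, ← pow_mul, ← pow_add]
    apply pow_le_pow_of_le_one hp0 hp1
    have := key T hTne
    calc a + 1 ≤ (univ \ T).card * r + (T.biUnion f).card := this
      _ = (T.biUnion f).card + r * (univ \ T).card := by ring
  have hcard : (((univ : Finset (Fin L)).powerset).erase univ).card = 2 ^ L - 1 := by
    rw [Finset.card_erase_of_mem huniv, Finset.card_powerset]
    simp
  calc |∑ T ∈ ((univ : Finset (Fin L)).powerset).erase univ,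
          p ^ (T.biUnion f).card * (-(p ^ r)) ^ (univ \ T).card|
      ≤ ∑ T ∈ ((univ : Finset (Fin L)).powerset).erase univ,
          |p ^ (T.biUnion f).card * (-(p ^ r)) ^ (univ \ T).card| :=
        Finset.abs_sum_le_sum_abs _ _
    _ ≤ ∑ _T ∈ ((univ : Finset (Fin L)).powerset).erase univ, p ^ (a + 1) :=
        Finset.sum_le_sum hbound
    _ = ((2 ^ L - 1 : ℕ) : ℝ) * p ^ (a + 1) := by
        rw [Finset.sum_const, hcard, nsmul_eq_mul]
    _ = ((2 : ℝ) ^ L - 1) * p ^ (a + 1) := by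
        have : (1 : ℕ) ≤ 2 ^ L := Nat.one_le_two_pow
        push_cast [this]
        ring
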